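/- Let n ≥ 1, let S be a finite nonempty set, let f : {0,1}^n → S and g : S × [n] → {0,1} be functions, and let ε ∈ (0, 1/2]. Suppose that for x chosen uniformly at random from {0,1}^n and i chosen uniformly at random from [n], independently, Pr[g(f(x), i) = x_i] ≥ 1/2 + ε. Then log₂ |S| ≥ n·(1 − h(1/2 + ε)), where h(p) = −p·log₂ p − (1−p)·log₂(1−p) is the binary entropy function (with the convention 0·log₂ 0 = 0). -/

import Mathlib

set_option maxHeartbeats 1000000
set_option maxRecDepth 20000
set_option synthInstance.maxHeartbeats 400000

open Finset Real

/-- Indexing lower bound. Let `f : {0,1}^n → S` (Alice's message) and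
`g : S × [n] → {0,1}` (Bob's answer), and suppose that for uniform independent
`x ∈ {0,1}^n` and `i ∈ [n]` one has `Pr[g (f x, i) = x i] ≥ 1/2 + ε` with
`ε ∈ (0, 1/2]`. Then `log₂ |S| ≥ n (1 - h(1/2 + ε))`, where
`h p = -p log₂ p - (1-p) log₂ (1-p)` is the binary entropy function. -/
theorem stmt_11 (n : ℕ) (hn : 1 ≤ n) (S : Type*) [Fintype S] [Nonempty S]
    (f : (Fin n → Bool) → S) (g : S × Fin n → Bool)
    (ε : ℝ) (hε : ε ∈ Set.Ioc (0 : ℝ) (1 / 2))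
    (hsucc : (1 / 2 + ε) * ((2 ^ n * n : ℕ) : ℝ) ≤
      ((Finset.univ.filter
        (fun p : (Fin n → Bool) × Fin n => g (f p.1, p.2) = p.1 p.2)).card : ℝ)) :
    (n : ℝ) * (1 - (-((1 / 2 + ε) * Real.logb 2 (1 / 2 + ε)) -
        (1 - (1 / 2 + ε)) * Real.logb 2 (1 - (1 / 2 + ε))))
      ≤ Real.logb 2 (Fintype.card S) := by
  classical
  obtain ⟨hε0, hε2⟩ := hε
  set p : ℝ := 1 / 2 + ε with hpdef
  have hp0 : (0:ℝ) < p := by rw [hpdef]; linarith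
  have hp1 : p ≤ 1 := by rw [hpdef]; linarith
  -- the per-input number of correct answers
  set c : (Fin n → Bool) → ℕ := fun x => (univ.filter (fun i => g (f x, i) = x i)).card
    with hcdef
  have hcount : ((univ.filter
      (fun p : (Fin n → Bool) × Fin n => g (f p.1, p.2) = p.1 p.2)).card : ℕ)
      = ∑ x : Fin n → Bool, c x := by
    rw [Finset.card_filter, Fintype.sum_prod_type]
    exact Finset.sum_congr rfl fun x _ => (Finset.card_filter _ _).symm
  have hcle : ∀ x, c x ≤ n := by
    intro x
    simpa using Finset.card_filter_le (univ : Finset (Fin n)) (fun i => g (f x, i) = x i)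
  rcases eq_or_lt_of_le hp1 with hp1' | hp1'
  · -- case p = 1 : all answers are correct, f is injective
    have hall : ∀ x : Fin n → Bool, ∀ i : Fin n, g (f x, i) = x i := by
      have hle : (univ.filter
          (fun p : (Fin n → Bool) × Fin n => g (f p.1, p.2) = p.1 p.2)).card
          ≤ 2 ^ n * n := by
        calc _ ≤ (univ : Finset ((Fin n → Bool) × Fin n)).card := Finset.card_filter_le _ _
        _ = 2 ^ n * n := by simp
      have hge' : 2 ^ n * n ≤ (univ.filter
          (fun p : (Fin n → Bool) × Fin n => g (f p.1, p.2) = p.1 p.2)).card := by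
        have := hsucc
        rw [hp1', one_mul] at this
        exact_mod_cast this
      have hcardeq : (univ.filter
          (fun p : (Fin n → Bool) × Fin n => g (f p.1, p.2) = p.1 p.2)).card
          = (univ : Finset ((Fin n → Bool) × Fin n)).card := by
        simp only [Finset.card_univ]
        have : Fintype.card ((Fin n → Bool) × Fin n) = 2 ^ n * n := by simp
        omega
      have huniv := Finset.eq_univ_of_card _ hcardeq
      intro x i
      have hx : ((x, i) : (Fin n → Bool) × Fin n) ∈ univ.filter
          (fun p : (Fin n → Bool) × Fin n => g (f p.1, p.2) = p.1 p.2) := by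
        rw [huniv]; exact Finset.mem_univ _
      simpa using (Finset.mem_filter.mp hx).2
    have hinj : Function.Injective f := by
      intro x y hxy
      funext i
      have h1 := hall x i
      have h2 := hall y i
      rw [hxy] at h1
      rw [← h1, ← h2]
    have hcard : (2 : ℕ) ^ n ≤ Fintype.card S := by
      have := Fintype.card_le_of_injective f hinj
      simpa using this
    rw [hp1']
    simp only [sub_self, Real.logb_zero, mul_zero, zero_mul, Real.logb_one, mul_one,
      neg_zero, sub_zero, one_mul]
    calc (n : ℝ) = Real.logb 2 ((2:ℝ) ^ n) := by
          rw [Real.logb_pow]; simp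
    _ ≤ Real.logb 2 (Fintype.card S) := by
          apply Real.logb_le_logb_of_le one_lt_two (by positivity)
          exact_mod_cast hcard
  · -- main case p < 1
    set q : ℝ := 1 - p with hqdef
    have hq0 : (0:ℝ) < q := by rw [hqdef]; linarith
    have hqp : q ≤ p := by rw [hqdef, hpdef]; linarith
    have hlogqp : Real.log q ≤ Real.log p := Real.log_le_log hq0 hqp
    set N : ℕ := 2 ^ n with hNdef
    have hN0 : (0:ℝ) < (N:ℝ) := by positivity
    have hcardX : Fintype.card (Fin n → Bool) = N := by simp [hNdef]
    -- the weight of each input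
    set t : (Fin n → Bool) → ℝ :=
      fun x => (c x : ℝ) * Real.log p + ((n - c x : ℕ) : ℝ) * Real.log q with htdef
    have hexp : ∀ x, Real.exp (t x) = p ^ (c x) * q ^ (n - c x) := by
      intro x
      rw [htdef]
      rw [Real.exp_add, Real.exp_nat_mul, Real.exp_nat_mul, Real.exp_log hp0,
        Real.exp_log hq0]
    -- For each message s, the total weight of its fiber is at most 1
    have hfiber : ∀ s : S,
        ∑ x ∈ univ.filter (fun x => f x = s), Real.exp (t x) ≤ 1 := by
      intro s
      have hprod : ∀ x ∈ univ.filter (fun x => f x = s),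
          Real.exp (t x) = ∏ i, (if g (s, i) = x i then p else q) := by
        intro x hx
        have hfx : f x = s := (Finset.mem_filter.mp hx).2
        rw [hexp, Finset.prod_ite, Finset.prod_const, Finset.prod_const]
        have hfilter : (univ.filter fun i => g (s, i) = x i)
            = univ.filter fun i => g (f x, i) = x i := by rw [hfx]
        have h1 : (univ.filter fun i => g (s, i) = x i).card = c x := by
          rw [hfilter]
        have h2 : (univ.filter fun i => ¬ g (s, i) = x i).card = n - c x := by
          have := Finset.card_filter_add_card_filter_not
            (s := (univ : Finset (Fin n))) (p := fun i => g (s, i) = x i)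
          simp only [Finset.card_univ, Fintype.card_fin] at this
          omega
        rw [h1, h2]
      rw [Finset.sum_congr rfl hprod]
      have htot : ∑ x : Fin n → Bool, ∏ i, (if g (s, i) = x i then p else q) = 1 := by
        rw [← Fintype.piFinset_univ,
          Finset.sum_prod_piFinset (univ : Finset Bool)
            (fun i b => if g (s, i) = b then p else q)]
        have : ∀ i : Fin n, ∑ b ∈ (univ : Finset Bool), (if g (s, i) = b then p else q) = 1 := by
          intro i
          cases hgs : g (s, i) <;> simp [Fintype.sum_bool, hqdef] <;> ring
        rw [Finset.prod_congr rfl (fun i _ => this i)]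
        simp
      calc ∑ x ∈ univ.filter (fun x => f x = s), ∏ i, (if g (s, i) = x i then p else q)
          ≤ ∑ x : Fin n → Bool, ∏ i, (if g (s, i) = x i then p else q) := by
            apply Finset.sum_le_sum_of_subset_of_nonneg (Finset.filter_subset _ _)
            intro x _ _
            exact Finset.prod_nonneg fun i _ => by positivity
      _ = 1 := htot
    -- Summing over all messages
    have hsumS : ∑ x : Fin n → Bool, Real.exp (t x) ≤ (Fintype.card S : ℝ) := by
      rw [← Finset.sum_fiberwise (univ : Finset (Fin n → Bool)) f (fun x => Real.exp (t x))]
      calc ∑ s : S, ∑ x ∈ univ.filter (fun x => f x = s), Real.exp (t x)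
          ≤ ∑ s : S, (1:ℝ) := Finset.sum_le_sum fun s _ => hfiber s
      _ = (Fintype.card S : ℝ) := by simp
    -- Jensen's inequality
    have hw1 : ∑ _x : Fin n → Bool, ((N:ℝ))⁻¹ = 1 := by
      rw [Finset.sum_const, Finset.card_univ, hcardX]
      rw [nsmul_eq_mul]; exact mul_inv_cancel₀ hN0.ne'
    have hjen := convexOn_exp.map_sum_le (t := (univ : Finset (Fin n → Bool)))
      (w := fun _ => ((N:ℝ))⁻¹) (p := t) (fun _ _ => by positivity) hw1
      (fun _ _ => Set.mem_univ _)
    simp only [smul_eq_mul] at hjen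
    -- Lower bound on the average of t
    have hsumt : (N : ℝ) * ((n:ℝ) * (p * Real.log p + q * Real.log q))
        ≤ ∑ x : Fin n → Bool, t x := by
      have hC : p * ((N:ℝ) * n) ≤ ((∑ x : Fin n → Bool, c x : ℕ) : ℝ) := by
        rw [← hcount]
        convert hsucc using 2
        push_cast [hNdef]
        ring
      have hsum_eq : ∑ x : Fin n → Bool, t x
          = ((∑ x : Fin n → Bool, c x : ℕ) : ℝ) * Real.log p
            + ((N:ℝ) * n - ((∑ x : Fin n → Bool, c x : ℕ) : ℝ)) * Real.log q := by
        rw [htdef]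
        rw [Finset.sum_add_distrib, ← Finset.sum_mul, ← Finset.sum_mul]
        congr 1
        · push_cast; ring
        congr 1
        have : ∀ x : Fin n → Bool, ((n - c x : ℕ) : ℝ) = (n:ℝ) - (c x : ℝ) := by
          intro x
          have := hcle x
          push_cast [Nat.cast_sub this]
          ring
        rw [Finset.sum_congr rfl (fun x _ => this x), Finset.sum_sub_distrib]
        rw [Finset.sum_const, Finset.card_univ, hcardX]
        push_cast [hNdef]
        ring
      rw [hsum_eq]
      set C : ℝ := ((∑ x : Fin n → Bool, c x : ℕ) : ℝ) with hCdef
      have h1 : 0 ≤ (C - p * ((N:ℝ) * n)) * (Real.log p - Real.log q) :=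
        mul_nonneg (by linarith) (by linarith)
      have hiden : C * Real.log p + ((N:ℝ) * n - C) * Real.log q
          = (N:ℝ) * ((n:ℝ) * (p * Real.log p + q * Real.log q))
            + (C - p * ((N:ℝ) * n)) * (Real.log p - Real.log q)
            + (N:ℝ) * n * (1 - p - q) * Real.log q := by ring
      have hterm : (N:ℝ) * n * (1 - p - q) * Real.log q = 0 := by
        rw [hqdef]; ring
      linarith [h1, hiden, hterm]
    -- combine
    have hmain : (N : ℝ) * Real.exp ((n:ℝ) * (p * Real.log p + q * Real.log q))
        ≤ (Fintype.card S : ℝ) := by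
      have h1 : Real.exp (∑ x : Fin n → Bool, ((N:ℝ))⁻¹ * t x)
          ≤ ((N:ℝ))⁻¹ * ∑ x : Fin n → Bool, Real.exp (t x) := by
        rw [Finset.mul_sum]
        exact hjen
      have h2 : (n:ℝ) * (p * Real.log p + q * Real.log q)
          ≤ ∑ x : Fin n → Bool, ((N:ℝ))⁻¹ * t x := by
        rw [← Finset.mul_sum, le_inv_mul_iff₀ hN0]
        exact hsumt
      have h3 : Real.exp ((n:ℝ) * (p * Real.log p + q * Real.log q))
          ≤ ((N:ℝ))⁻¹ * ∑ x : Fin n → Bool, Real.exp (t x) :=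
        le_trans (Real.exp_le_exp.mpr h2) h1
      calc (N : ℝ) * Real.exp ((n:ℝ) * (p * Real.log p + q * Real.log q))
          ≤ (N:ℝ) * (((N:ℝ))⁻¹ * ∑ x : Fin n → Bool, Real.exp (t x)) := by
            exact mul_le_mul_of_nonneg_left h3 (le_of_lt hN0)
      _ = ∑ x : Fin n → Bool, Real.exp (t x) := by field_simp
      _ ≤ (Fintype.card S : ℝ) := hsumS
    -- take logarithms
    have hlog2 : (0:ℝ) < Real.log 2 := Real.log_pos one_lt_two
    have hScard : (0:ℝ) < (Fintype.card S : ℝ) := by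
      exact_mod_cast Fintype.card_pos
    have hlogS : (n:ℝ) * Real.log 2 + (n:ℝ) * (p * Real.log p + q * Real.log q)
        ≤ Real.log (Fintype.card S) := by
      have hlhs : (0:ℝ) < (N : ℝ) * Real.exp ((n:ℝ) * (p * Real.log p + q * Real.log q)) := by
        positivity
      have := Real.log_le_log hlhs hmain
      rw [Real.log_mul (ne_of_gt hN0) (ne_of_gt (Real.exp_pos _)), Real.log_exp] at this
      have hlogN : Real.log (N:ℝ) = (n:ℝ) * Real.log 2 := by
        rw [hNdef]
        push_cast
        rw [Real.log_pow]
      linarith [this, hlogN ▸ this]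
    show (n:ℝ) * (1 - (-(p * Real.logb 2 p) - q * Real.logb 2 q))
        ≤ Real.logb 2 (Fintype.card S)
    rw [Real.logb, Real.logb, Real.logb, le_div_iff₀ hlog2]
    have hexpand : ((n:ℝ) * (1 - (-(p * (Real.log p / Real.log 2)) -
        q * (Real.log q / Real.log 2)))) * Real.log 2
        = (n:ℝ) * Real.log 2 + (n:ℝ) * (p * Real.log p + q * Real.log q) := by
      field_simp
      ring
    rw [hexpand]
    exact hlogS
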